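/- For F^L(x) = x − Σ_{j=1}^{L} 2^{−2j} G^j(x) with G(x) = min{2x, 2(1−x)}, we have 0 ≤ F^L(x) − x² ≤ 2^{−2L−2} for all x ∈ [0,1]. -/

import Mathlib

/-- The tooth function `G(x) = min (2x) (2(1-x))`. -/
noncomputable def sawG (x : ℝ) : ℝ := min (2 * x) (2 * (1 - x))

/-- The sawtooth approximation `F^L(x) = x - ∑_{j=1}^L 2^{-2j} G^j(x)`. -/
noncomputable def sawF (L : ℕ) (x : ℝ) : ℝ :=
  x - ∑ j ∈ Finset.Icc 1 L, (2 : ℝ) ^ (-(2 * (j : ℤ))) * sawG^[j] x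

lemma sawG_mem {x : ℝ} (hx : x ∈ Set.Icc (0 : ℝ) 1) : sawG x ∈ Set.Icc (0 : ℝ) 1 := by
  obtain ⟨h0, h1⟩ := hx
  constructor
  · exact le_min (by linarith) (by linarith)
  · rcases le_total x (1/2) with h | h
    · exact le_trans (min_le_left _ _) (by linarith)
    · exact le_trans (min_le_right _ _) (by linarith)

lemma sum_shift (n : ℕ) (f : ℕ → ℝ) :
    ∑ j ∈ Finset.Icc 1 n, f j = ∑ i ∈ Finset.range n, f (i + 1) := by
  rw [show Finset.Icc 1 n = Finset.Ico 1 (n+1) by rw [Finset.Ico_add_one_right_eq_Icc], Finset.sum_Ico_eq_sum_range]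
  simp [add_comm]

lemma sawF_succ (L : ℕ) (x : ℝ) :
    sawF (L + 1) x = x - (4:ℝ)⁻¹ * sawG x - (4:ℝ)⁻¹ * (sawG x - sawF L (sawG x)) := by
  unfold sawF
  rw [sum_shift, sum_shift, Finset.sum_range_succ']
  have h1 : ∀ i : ℕ, (2 : ℝ) ^ (-(2 * ((i + 1 + 1 : ℕ) : ℤ))) * sawG^[i + 1 + 1] x
      = (4:ℝ)⁻¹ * ((2 : ℝ) ^ (-(2 * ((i + 1 : ℕ) : ℤ))) * sawG^[i + 1] (sawG x)) := by
    intro i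
    rw [Function.iterate_succ_apply]
    push_cast
    rw [show (-(2 * ((i:ℤ) + 1 + 1))) = (-(2 * ((i:ℤ) + 1))) + (-2) by ring, zpow_add₀ (by norm_num : (2:ℝ) ≠ 0)]
    norm_num
    ring
  simp only [h1, ← Finset.mul_sum]
  norm_num
  ring

lemma key (L : ℕ) (x : ℝ) (hx : x ∈ Set.Icc (0 : ℝ) 1) :
    sawF (L + 1) x - x ^ 2 = (4:ℝ)⁻¹ * (sawF L (sawG x) - (sawG x) ^ 2) := by
  obtain ⟨h0, h1⟩ := hx
  rw [sawF_succ]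
  rcases le_total x (1/2) with h | h
  · have : sawG x = 2 * x := min_eq_left (by linarith)
    rw [this]; ring
  · have : sawG x = 2 * (1 - x) := min_eq_right (by linarith)
    rw [this]; ring

/-- `0 ≤ F^L(x) - x² ≤ 2^{-2L-2}` for all `x ∈ [0,1]`. -/
theorem sawF_overestimates (L : ℕ) (x : ℝ) (hx : x ∈ Set.Icc (0 : ℝ) 1) :
    0 ≤ sawF L x - x ^ 2 ∧ sawF L x - x ^ 2 ≤ (2 : ℝ) ^ (-(2 * (L : ℤ)) - 2) := by
  induction L generalizing x with
  | zero =>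
    obtain ⟨h0, h1⟩ := hx
    simp only [sawF, Finset.Icc_self, Nat.cast_zero]
    norm_num
    constructor
    · nlinarith
    · nlinarith [sq_nonneg (x - 1/2)]
  | succ n ih =>
    obtain ⟨ih1, ih2⟩ := ih (sawG x) (sawG_mem hx)
    rw [key n x hx]
    constructor
    · positivity
    · have : (2 : ℝ) ^ (-(2 * ((n+1 : ℕ) : ℤ)) - 2) = (4:ℝ)⁻¹ * (2 : ℝ) ^ (-(2 * (n : ℤ)) - 2) := by
        push_cast
        rw [show (-(2 * ((n:ℤ) + 1)) - 2) = (-(2 * (n:ℤ)) - 2) + (-2) by ring,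
          zpow_add₀ (by norm_num : (2:ℝ) ≠ 0)]
        norm_num
        ring
      rw [this]
      nlinarith [ih2]
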